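/- Let Ω : ℝ → M_n(ℂ) be a differentiable matrix-valued function. Then for every t, the map t ↦ exp(Ω(t)) is differentiable and d/dt exp(Ω(t)) = ∫_{0}^{1} exp(s·Ω(t)) · Ω'(t) · exp((1−s)·Ω(t)) ds. -/

import Mathlib

open scoped Matrix.Norms.L2Operator

open NormedSpace

section aux

variable {n : ℕ}

lemma exp_smul_hasDerivAt (B : Matrix (Fin n) (Fin n) ℂ) (s : ℝ) :
    HasDerivAt (fun s : ℝ => NormedSpace.exp (s • B))
      (NormedSpace.exp (s • B) * B) s := by
  have := hasDerivAt_exp_smul_const (𝕂 := ℝ) B s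
  exact this

lemma exp_smul_hasDerivAt' (B : Matrix (Fin n) (Fin n) ℂ) (s : ℝ) :
    HasDerivAt (fun s : ℝ => NormedSpace.exp (s • B))
      (B * NormedSpace.exp (s • B)) s := by
  have := hasDerivAt_exp_smul_const' (𝕂 := ℝ) B s
  exact this

/-- Duhamel integral identity. -/
lemma duhamel_identity (A B : Matrix (Fin n) (Fin n) ℂ) :
    NormedSpace.exp B - NormedSpace.exp A =
      ∫ s in (0:ℝ)..1,
        NormedSpace.exp (s • B) * (B - A) * NormedSpace.exp ((1 - s) • A) := by
  have key : ∀ s : ℝ,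
      HasDerivAt (fun s : ℝ => NormedSpace.exp (s • B) * NormedSpace.exp ((1 - s) • A))
        (NormedSpace.exp (s • B) * (B - A) * NormedSpace.exp ((1 - s) • A)) s := by
    intro s
    have h1 := exp_smul_hasDerivAt B s
    have h2' := exp_smul_hasDerivAt' A (1 - s)
    have hinner : HasDerivAt (fun s : ℝ => 1 - s) (-1) s := by
      simpa using (hasDerivAt_id s).const_sub 1
    have h2 : HasDerivAt (fun s : ℝ => NormedSpace.exp ((1 - s) • A))
        (-(A * NormedSpace.exp ((1 - s) • A))) s := by
      have := h2'.scomp s hinner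
      simpa [neg_one_smul, Function.comp_def] using this
    have h3 := h1.mul h2
    convert h3 using 1
    · rfl
    · rfl
    · rfl
    · rfl
    noncomm_ring
  have hcont : Continuous (fun s : ℝ =>
      NormedSpace.exp (s • B) * (B - A) * NormedSpace.exp ((1 - s) • A)) := by
    letI : NormedAlgebra ℚ (Matrix (Fin n) (Fin n) ℂ) := NormedAlgebra.restrictScalars ℚ ℂ _
    have he : Continuous (NormedSpace.exp : Matrix (Fin n) (Fin n) ℂ → _) :=
      NormedSpace.exp_continuous
    fun_prop
  have hftc := intervalIntegral.integral_eq_sub_of_hasDerivAt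
    (f := fun s : ℝ => NormedSpace.exp (s • B) * NormedSpace.exp ((1 - s) • A))
    (fun s _ => key s) (hcont.intervalIntegrable 0 1)
  rw [hftc]
  simp [NormedSpace.exp_zero]

end aux

/-- Duhamel's formula: if `Ω : ℝ → Mₙ(ℂ)` is differentiable with derivative
`Ω'`, then `t ↦ exp(Ω(t))` is differentiable with derivative
`∫_0^1 exp(sΩ(t)) Ω'(t) exp((1−s)Ω(t)) ds`. -/
theorem hasDerivAt_matrix_exp {n : ℕ} (Ω Ω' : ℝ → Matrix (Fin n) (Fin n) ℂ)
    (hΩ : ∀ t, HasDerivAt Ω (Ω' t) t) (t : ℝ) :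
    HasDerivAt (fun u => NormedSpace.exp (Ω u))
      (∫ s in (0:ℝ)..1,
        NormedSpace.exp (s • Ω t) * Ω' t * NormedSpace.exp ((1 - s) • Ω t)) t := by
  set g : Matrix (Fin n) (Fin n) ℂ × Matrix (Fin n) (Fin n) ℂ → Matrix (Fin n) (Fin n) ℂ :=
    fun p => ∫ s in (0:ℝ)..1,
      NormedSpace.exp (s • p.1) * p.2 * NormedSpace.exp ((1 - s) • Ω t) with hg
  have hgcont : Continuous g := by
    apply intervalIntegral.continuous_parametric_intervalIntegral_of_continuous'
      (f := fun (p : Matrix (Fin n) (Fin n) ℂ × Matrix (Fin n) (Fin n) ℂ) (s : ℝ) =>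
        NormedSpace.exp (s • p.1) * p.2 * NormedSpace.exp ((1 - s) • Ω t))
    letI : NormedAlgebra ℚ (Matrix (Fin n) (Fin n) ℂ) := NormedAlgebra.restrictScalars ℚ ℂ _
    have he : Continuous (NormedSpace.exp : Matrix (Fin n) (Fin n) ℂ → _) :=
      NormedSpace.exp_continuous
    unfold Function.uncurry
    fun_prop
  rw [hasDerivAt_iff_tendsto_slope]
  have hslope : ∀ u : ℝ, u ≠ t →
      slope (fun u => NormedSpace.exp (Ω u)) t u = g (Ω u, slope Ω t u) := by
    intro u hu
    have hid := duhamel_identity (Ω t) (Ω u)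
    simp only [slope, vsub_eq_sub, hg]
    rw [hid, ← intervalIntegral.integral_smul]
    congr 1
    ext s
    simp only [Matrix.mul_smul, Matrix.smul_mul]
  have htend : Filter.Tendsto (fun u => g (Ω u, slope Ω t u)) (nhdsWithin t {t}ᶜ)
      (nhds (g (Ω t, Ω' t))) := by
    apply (hgcont.tendsto _).comp
    apply Filter.Tendsto.prodMk_nhds
    · exact ((hΩ t).continuousAt.tendsto).mono_left nhdsWithin_le_nhds
    · exact hasDerivAt_iff_tendsto_slope.mp (hΩ t)
  have hval : g (Ω t, Ω' t) =
      ∫ s in (0:ℝ)..1,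
        NormedSpace.exp (s • Ω t) * Ω' t * NormedSpace.exp ((1 - s) • Ω t) := rfl
  rw [← hval]
  exact htend.congr' (by filter_upwards [self_mem_nhdsWithin] with u hu using (hslope u hu).symm)
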